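/- Let ρ be a cycle of length greater than 3 in a chordal graph and X a vertex on ρ. If the two vertices adjacent to X on ρ are not adjacent to each other in the graph, then ρ has a chord with X as an endpoint. -/

import Mathlib

variable {V : Type*}

/-- A list of vertices is a path in `G`: all vertices distinct and consecutive
vertices adjacent. -/
def IsListPath (G : SimpleGraph V) (p : List V) : Prop :=
  p.Nodup ∧ p.Chain' G.Adj

/-- A chord of a path: an edge of `G` joining two nonconsecutive vertices on the path. -/
def PathHasChord (G : SimpleGraph V) (p : List V) : Prop :=
  ∃ (i j : ℕ) (hi : i < p.length) (hj : j < p.length),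
    i + 1 < j ∧ G.Adj (p.get ⟨i, hi⟩) (p.get ⟨j, hj⟩)

/-- A path is triangle-free if no three consecutive vertices on it are pairwise
adjacent, i.e. `v i` is never adjacent to `v (i+2)`. -/
def PathTriangleFree (G : SimpleGraph V) (p : List V) : Prop :=
  ∀ (i : ℕ) (h : i + 2 < p.length),
    ¬ G.Adj (p.get ⟨i, by omega⟩) (p.get ⟨i + 2, h⟩)

/-- A list of (at least three) distinct vertices forming a cycle of `G`:
consecutive vertices adjacent and the last vertex adjacent to the first.
Its length (number of edges) is `p.length`. -/
def IsListCycle (G : SimpleGraph V) (p : List V) : Prop :=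
  3 ≤ p.length ∧ p.Nodup ∧ p.Chain' G.Adj ∧
    ∃ h : p ≠ [], G.Adj (p.getLast h) (p.head h)

/-- A chord of a cycle: an edge joining two cyclically nonconsecutive vertices. -/
def CycleHasChord (G : SimpleGraph V) (p : List V) : Prop :=
  ∃ (i j : ℕ) (hi : i < p.length) (hj : j < p.length),
    i + 1 < j ∧ ¬ (i = 0 ∧ j = p.length - 1) ∧
      G.Adj (p.get ⟨i, hi⟩) (p.get ⟨j, hj⟩)

/-- A chordal graph: every cycle of length greater than three has a chord. -/
def IsChordal (G : SimpleGraph V) : Prop :=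
  ∀ p : List V, IsListCycle G p → 3 < p.length → CycleHasChord G p

/-- `E` is an orientation of the edges of `G`: every edge gets exactly one
direction, and directed edges only occur where `G` has edges. -/
def IsOrientation (G : SimpleGraph V) (E : V → V → Prop) : Prop :=
  (∀ a b, E a b → G.Adj a b) ∧
  (∀ a b, G.Adj a b → (E a b ∨ E b a)) ∧
  (∀ a b, ¬ (E a b ∧ E b a))

/-- An acyclic directed relation: no directed cycles. -/
def OrientAcyclic (E : V → V → Prop) : Prop := ∀ a, ¬ Relation.TransGen E a a

/-- A v-structure-free orientation: no vertex has two non-adjacent parents. -/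
def VSFree (G : SimpleGraph V) (E : V → V → Prop) : Prop :=
  ∀ a b c, E a b → E c b → a ≠ c → G.Adj a c

/-- A source: a vertex with no incoming directed edge. -/
def IsSource (E : V → V → Prop) (v : V) : Prop := ∀ a, ¬ E a v

/-- cyclic adjacency -/
lemma cyc_adj (G : SimpleGraph V) {p : List V} (hp : IsListCycle G p)
    (t : ℕ) (ht : t < p.length) :
    G.Adj (p[t]'ht) (p[(t+1) % p.length]'(Nat.mod_lt _ (by omega))) := by
  obtain ⟨h3, hn, hc, hne, hw⟩ := hp
  rcases lt_or_ge (t+1) p.length with h | h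
  · have : (t+1) % p.length = t+1 := Nat.mod_eq_of_lt h
    simp only [this]
    have := List.isChain_iff_getElem.1 hc t (by omega)
    simpa using this
  · have ht' : t = p.length - 1 := by omega
    have : (t+1) % p.length = 0 := by
      have : t + 1 = p.length := by omega
      simp [this]
    simp only [this]
    have h1 : p.getLast hne = p[t]'ht := by
      subst ht'; exact List.getLast_eq_getElem hne
    have h2 : p.head hne = p[0]'(by omega) := List.head_eq_getElem_zero hne
    rw [h1, h2] at hw
    convert hw using 2

lemma cycle_rotate (G : SimpleGraph V) {p : List V} (hp : IsListCycle G p) (n : ℕ) :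
    IsListCycle G (p.rotate n) := by
  have hlen : (p.rotate n).length = p.length := p.length_rotate n
  obtain ⟨h3, hn, -, -⟩ := id hp
  refine ⟨by omega, List.nodup_rotate.2 hn, ?_, ?_⟩
  · show List.IsChain _ _
    rw [List.isChain_iff_getElem]
    intro i h
    rw [List.getElem_rotate, List.getElem_rotate]
    simp only [hlen] at h
    have := cyc_adj G hp ((i + n) % p.length) (Nat.mod_lt _ (by omega))
    convert this using 2
    rw [Nat.mod_add_mod, Nat.add_right_comm]
  · have hne : p.rotate n ≠ [] := by
      intro h; rw [← List.length_eq_zero_iff] at h; omega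
    refine ⟨hne, ?_⟩
    rw [List.getLast_eq_getElem, List.head_eq_getElem_zero]
    have g1 := List.get_rotate p n ⟨(p.rotate n).length - 1, by omega⟩
    have g2 := List.get_rotate p n ⟨0, by omega⟩
    simp only [List.get_eq_getElem] at g1 g2
    rw [g1, g2]
    have := cyc_adj G hp (((p.rotate n).length - 1 + n) % p.length) (Nat.mod_lt _ (by omega))
    convert this using 2
    rw [Nat.mod_add_mod, show (p.rotate n).length - 1 + n + 1 = p.length + n from by omega,
      Nat.add_mod_left]
    simp


lemma aux_main (G : SimpleGraph V) (hG : IsChordal G) :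
    ∀ (n : ℕ) (p : List V), p.length ≤ n → IsListCycle G p → 3 < p.length →
    ∀ (h0 : 0 < p.length) (h1 : 1 < p.length) (h2 : 2 < p.length),
    ¬ G.Adj (p[0]'h0) (p[2]'h2) →
    ∃ w ∈ p, w ≠ p[1]'h1 ∧ w ≠ p[0]'h0 ∧ w ≠ p[2]'h2 ∧ G.Adj (p[1]'h1) w := by
  intro n
  induction n with
  | zero => intro p hle _ hlen; omega
  | succ n IH =>
    intro p hle hp hlen h0 h1 h2 hnadj
    obtain ⟨j, k, hj, hk, hjk, hnw, hadj⟩ := hG p hp hlen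
    simp only [List.get_eq_getElem] at hadj
    obtain ⟨h3, hnodup, hchain, hne, hwrap⟩ := id hp
    by_cases hj1 : j = 1
    · subst hj1
      refine ⟨p[k], List.getElem_mem hk, ?_, ?_, ?_, hadj⟩ <;>
        · intro h
          rw [hnodup.getElem_inj_iff] at h
          omega
    · rcases Nat.lt_or_ge j 1 with hj0 | hj2
      · -- j = 0
        have hj0 : j = 0 := by omega
        subst hj0
        by_cases hk2 : k = 2
        · subst hk2; exact absurd hadj hnadj
        · have hk3 : 3 ≤ k := by omega
          have hk' : k ≤ p.length - 2 := by
            rcases Nat.lt_or_ge k (p.length - 1) with h | h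
            · omega
            · exfalso; exact hnw ⟨rfl, by omega⟩
          set q := p.take (k+1) with hqdef
          have hql : q.length = k + 1 := by
            simp [hqdef, List.length_take]; omega
          have hqget : ∀ (t : ℕ) (ht : t < q.length), q[t]'ht = p[t]'(by omega) := by
            intro t ht; simp [hqdef, List.getElem_take]
          have hq : IsListCycle G q := by
            refine ⟨by omega, (List.take_sublist _ _).nodup hnodup, hchain.take _, ?_, ?_⟩
            · intro h; rw [← List.length_eq_zero_iff] at h; omega
            · rw [List.getLast_eq_getElem, List.head_eq_getElem_zero]
              rw [hqget _ (by omega), hqget _ (by omega)]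
              have : q.length - 1 = k := by omega
              simp only [this]
              exact hadj.symm
          obtain ⟨w, hwq, hw1, hw0, hw2, hadjw⟩ :=
            IH q (by omega) hq (by omega) (by omega) (by omega) (by omega)
              (by rw [hqget _ (by omega), hqget _ (by omega)]; exact hnadj)
          rw [hqget _ (by omega)] at hw0 hadjw hw1 hw2
          exact ⟨w, (List.take_sublist _ _).subset hwq, hw1, hw0, hw2, hadjw⟩
      · -- j ≥ 2
        have hj2 : 2 ≤ j := by omega
        set q := p.take (j+1) ++ p.drop k with hqdef
        have hlt : (p.take (j+1)).length = j + 1 := by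
          simp [List.length_take]; omega
        have hld : (p.drop k).length = p.length - k := by simp
        have hql : q.length = (j + 1) + (p.length - k) := by
          simp [hqdef, hlt, hld]
        have hqget : ∀ (t : ℕ) (ht : t ≤ j), q[t]'(by omega) = p[t]'(by omega) := by
          intro t ht
          exact (List.getElem_append_left (by omega)).trans List.getElem_take
        have hsub : List.Sublist q p := by
          have hdd : List.Sublist (p.drop k) (p.drop (j+1)) := by
            have : p.drop k = (p.drop (j+1)).drop (k - (j+1)) := by
              rw [List.drop_drop]; congr 1; omega
            rw [this]
            exact List.drop_sublist _ _
          have := hdd.append_left (p.take (j+1))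
          rwa [List.take_append_drop] at this
        have hdne : p.drop k ≠ [] := by
          intro h; rw [← List.length_eq_zero_iff] at h; simp at h; omega
        have hqne : q ≠ [] := by intro h; rw [← List.length_eq_zero_iff] at h; omega
        have hq : IsListCycle G q := by
          refine ⟨by omega, hsub.nodup hnodup, ?_, hqne, ?_⟩
          · rw [hqdef]; show List.IsChain _ _; rw [List.isChain_append]
            refine ⟨hchain.take _, hchain.drop _, ?_⟩
            intro x hx y hy
            have hxe : x = p[j] := by
              rw [List.getLast?_eq_getLast_of_ne_nil (by
                  intro h; rw [← List.length_eq_zero_iff] at h; omega)] at hx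
              rw [List.getLast_eq_getElem] at hx
              simp only [Option.mem_def, Option.some.injEq] at hx
              rw [← hx, List.getElem_take]
              congr 1; omega
            have hye : y = p[k] := by
              rw [List.head?_drop] at hy
              simp only [List.getElem?_eq_getElem hk, Option.mem_def, Option.some.injEq] at hy
              exact hy.symm
            rw [hxe, hye]; exact hadj
          · have e1 : q.getLast hqne = p.getLast hne := by
              show (p.take (j+1) ++ p.drop k).getLast (by simp [← hqdef, hqne]) = p.getLast hne
              rw [List.getLast_append]
              rw [dif_neg (by simpa [List.isEmpty_iff] using hdne)]
              rw [List.getLast_eq_getElem, List.getLast_eq_getElem, List.getElem_drop]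
              congr 1
              simp only [List.length_drop]
              omega
            have e2 : q.head hqne = p.head hne := by
              rw [List.head_eq_getElem_zero, List.head_eq_getElem_zero]
              exact hqget 0 (by omega)
            rw [e1, e2]
            exact hwrap
        obtain ⟨w, hwq, hw1, hw0, hw2, hadjw⟩ :=
          IH q (by omega) hq (by omega) (by omega) (by omega) (by omega)
            (by rw [hqget 0 (by omega), hqget 2 (by omega)]; exact hnadj)
        rw [hqget 1 (by omega)] at hw1 hadjw
        rw [hqget 0 (by omega)] at hw0
        rw [hqget 2 (by omega)] at hw2
        exact ⟨w, hsub.subset hwq, hw1, hw0, hw2, hadjw⟩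


/-- If the two vertices adjacent to a vertex `X = p[i]` on a cycle of length `> 3`
in a chordal graph are non-adjacent, then the cycle has a chord with `X` as an
endpoint (an edge from `X` to a vertex of the cycle other than `X` and its two
cyclic neighbours). -/
theorem stmt1 (G : SimpleGraph V) (hG : IsChordal G) (p : List V)
    (hp : IsListCycle G p) (hlen : 3 < p.length) (i : ℕ) (hi : i < p.length)
    (hnadj : ¬ G.Adj (p.get ⟨(i + p.length - 1) % p.length, Nat.mod_lt _ (by omega)⟩)
      (p.get ⟨(i + 1) % p.length, Nat.mod_lt _ (by omega)⟩)) :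
    ∃ w ∈ p, w ≠ p.get ⟨i, hi⟩ ∧
      w ≠ p.get ⟨(i + p.length - 1) % p.length, Nat.mod_lt _ (by omega)⟩ ∧
      w ≠ p.get ⟨(i + 1) % p.length, Nat.mod_lt _ (by omega)⟩ ∧
      G.Adj (p.get ⟨i, hi⟩) w := by
  classical
  have hL : 0 < p.length := by omega
  set m := (i + p.length - 1) % p.length with hm
  have hmL : m < p.length := Nat.mod_lt _ hL
  set q := p.rotate m with hqdef
  have hq := cycle_rotate G hp m
  have hlq : q.length = p.length := p.length_rotate m
  have g : ∀ (t : ℕ) (ht : t < q.length),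
      q[t]'ht = p[(t + m) % p.length]'(Nat.mod_lt _ hL) := by
    intro t ht
    exact List.getElem_rotate p m t ht
  have e0 : (0 + m) % p.length = (i + p.length - 1) % p.length := by
    rw [Nat.zero_add, Nat.mod_eq_of_lt hmL]
  have e1 : (1 + m) % p.length = i := by
    rw [Nat.add_comm, hm, Nat.mod_add_mod,
      show i + p.length - 1 + 1 = i + p.length from by omega,
      Nat.add_mod_right, Nat.mod_eq_of_lt hi]
  have e2 : (2 + m) % p.length = (i + 1) % p.length := by
    rw [Nat.add_comm, hm, Nat.mod_add_mod,
      show i + p.length - 1 + 2 = (i + 1) + p.length from by omega,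
      Nat.add_mod_right]
  have g0 : q[0]'(by omega) = p[(i + p.length - 1) % p.length]'(Nat.mod_lt _ hL) := by
    rw [g 0 (by omega)]
    congr 1
  have g1 : q[1]'(by omega) = p[i]'hi := by
    rw [g 1 (by omega)]
    congr 1
  have g2 : q[2]'(by omega) = p[(i + 1) % p.length]'(Nat.mod_lt _ hL) := by
    rw [g 2 (by omega)]
    congr 1
  simp only [List.get_eq_getElem] at hnadj ⊢
  have hnadj' : ¬ G.Adj (q[0]'(by omega)) (q[2]'(by omega)) := by
    rw [g0, g2]; exact hnadj
  obtain ⟨w, hwq, hw1, hw0, hw2, hadjw⟩ :=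
    aux_main G hG q.length q le_rfl hq (by omega) (by omega) (by omega) (by omega) hnadj'
  rw [g1] at hw1 hadjw
  rw [g0] at hw0
  rw [g2] at hw2
  exact ⟨w, List.mem_rotate.1 hwq, hw1, hw0, hw2, hadjw⟩
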